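/- Relative-residual stopping criteria with ε_abs = 0 are invariant under problem scaling: if ‖r_rel^{(k)}‖₂ ≤ ε_rel and ‖s_rel^{(k)}‖₂ ≤ ε_rel hold for problem P, they hold with identical values for the scaled problem P̃ under the iterate correspondence x̃ = γ⁻¹x, z̃ = γ⁻¹z, ỹ = (α/β)y, ρ̃ = (α/β²)ρ. -/

import Mathlib

open Matrix BigOperators

/-- Euclidean norm on `Fin p → ℝ`. -/
noncomputable def euclidEnorm {p : ℕ} (v : Fin p → ℝ) : ℝ := Real.sqrt (∑ i, v i ^ 2)

lemma euclidEnorm_smul {q : ℕ} (t : ℝ) (v : Fin q → ℝ) : euclidEnorm (t • v) = |t| * euclidEnorm v := by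
  unfold euclidEnorm
  rw [← Real.sqrt_sq_eq_abs, ← Real.sqrt_mul (sq_nonneg t), Finset.mul_sum]
  congr 1; exact Finset.sum_congr rfl fun i _ => by simp [mul_pow]

/-- Relative-residual stopping criteria (with `ε_abs = 0`) are invariant under
the problem scaling `Ã = βγA`, `B̃ = βγB`, `c̃ = βc`, `ρ̃ = (α/β²)ρ`,
`x̃ = γ⁻¹x`, `z̃ = γ⁻¹z`, `ỹ = (α/β)y`. -/
theorem stopping_criteria_invariance {n m p : ℕ}
    (A : Matrix (Fin p) (Fin n) ℝ) (B : Matrix (Fin p) (Fin m) ℝ) (c : Fin p → ℝ)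
    (α β γ ρ εrel : ℝ) (hα : 0 < α) (hβ : 0 < β) (hγ : 0 < γ) (hρ : 0 < ρ)
    (xk : Fin n → ℝ) (zk zk0 : Fin m → ℝ) (yk : Fin p → ℝ)
    (hden1 : max (euclidEnorm (A *ᵥ xk)) (max (euclidEnorm (B *ᵥ zk)) (euclidEnorm c)) ≠ 0)
    (hden2 : euclidEnorm (Aᵀ *ᵥ yk) ≠ 0)
    (hrstop : euclidEnorm ((max (euclidEnorm (A *ᵥ xk)) (max (euclidEnorm (B *ᵥ zk)) (euclidEnorm c)))⁻¹ •
        (A *ᵥ xk + B *ᵥ zk - c)) ≤ εrel)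
    (hsstop : euclidEnorm ((euclidEnorm (Aᵀ *ᵥ yk))⁻¹ •
        (ρ • (Aᵀ *ᵥ (B *ᵥ (zk - zk0))))) ≤ εrel) :
    euclidEnorm ((max (euclidEnorm (((β * γ) • A) *ᵥ (γ⁻¹ • xk)))
          (max (euclidEnorm (((β * γ) • B) *ᵥ (γ⁻¹ • zk))) (euclidEnorm (β • c))))⁻¹ •
        (((β * γ) • A) *ᵥ (γ⁻¹ • xk) + ((β * γ) • B) *ᵥ (γ⁻¹ • zk) - β • c)) ≤ εrel ∧
    euclidEnorm ((euclidEnorm (((β * γ) • A)ᵀ *ᵥ ((α / β) • yk)))⁻¹ •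
        (((α / β ^ 2) * ρ) •
          (((β * γ) • A)ᵀ *ᵥ (((β * γ) • B) *ᵥ ((γ⁻¹ • zk) - (γ⁻¹ • zk0)))))) ≤ εrel := by
  have hβ' := hβ.ne'
  have hγ' := hγ.ne'
  have hα' := hα.ne'
  have hAx : ((β * γ) • A) *ᵥ (γ⁻¹ • xk) = β • (A *ᵥ xk) := by
    rw [Matrix.smul_mulVec, Matrix.mulVec_smul, smul_smul]
    congr 1; field_simp
  have hBz : ((β * γ) • B) *ᵥ (γ⁻¹ • zk) = β • (B *ᵥ zk) := by
    rw [Matrix.smul_mulVec, Matrix.mulVec_smul, smul_smul]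
    congr 1; field_simp
  have hAy : (((β * γ) • A)ᵀ) *ᵥ ((α / β) • yk) = (α * γ) • (Aᵀ *ᵥ yk) := by
    rw [Matrix.transpose_smul, Matrix.smul_mulVec, Matrix.mulVec_smul, smul_smul]
    congr 1; field_simp
  have hzz : (γ⁻¹ • zk) - (γ⁻¹ • zk0) = γ⁻¹ • (zk - zk0) := (smul_sub _ _ _).symm
  have hnum2 : ((α / β ^ 2) * ρ) •
      (((β * γ) • A)ᵀ *ᵥ (((β * γ) • B) *ᵥ ((γ⁻¹ • zk) - (γ⁻¹ • zk0))))
      = (α * γ) • (ρ • (Aᵀ *ᵥ (B *ᵥ (zk - zk0)))) := by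
    rw [hzz, Matrix.transpose_smul, Matrix.smul_mulVec, Matrix.smul_mulVec,
      Matrix.mulVec_smul, Matrix.mulVec_smul, Matrix.mulVec_smul]
    simp only [smul_smul]
    congr 1; field_simp
  set D := max (euclidEnorm (A *ᵥ xk)) (max (euclidEnorm (B *ᵥ zk)) (euclidEnorm c)) with hD
  set N := euclidEnorm (Aᵀ *ᵥ yk) with hN
  constructor
  · have hmax : max (euclidEnorm (β • (A *ᵥ xk))) (max (euclidEnorm (β • (B *ᵥ zk))) (euclidEnorm (β • c)))
        = β * D := by
      rw [euclidEnorm_smul, euclidEnorm_smul, euclidEnorm_smul, abs_of_pos hβ,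
        ← mul_max_of_nonneg _ _ hβ.le, ← mul_max_of_nonneg _ _ hβ.le]
    rw [hAx, hBz, ← smul_add, ← smul_sub, hmax, smul_smul, euclidEnorm_smul]
    have hc : (β * D)⁻¹ * β = D⁻¹ := by
      rw [mul_inv, mul_comm β⁻¹, mul_assoc, inv_mul_cancel₀ hβ', mul_one]
    rw [hc]
    rw [euclidEnorm_smul] at hrstop
    exact hrstop
  · have hαγ : (0:ℝ) < α * γ := by positivity
    rw [hAy, hnum2, euclidEnorm_smul (α * γ), abs_of_pos hαγ, smul_smul, euclidEnorm_smul]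
    have hc : (α * γ * N)⁻¹ * (α * γ) = N⁻¹ := by
      rw [mul_inv, mul_comm (α*γ)⁻¹, mul_assoc, inv_mul_cancel₀ hαγ.ne', mul_one]
    rw [hc]
    rw [euclidEnorm_smul] at hsstop
    exact hsstop
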